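/- In UniVer's allocation phase with p̃ = 1 (root node), the rejection probability vanishes: p_v(¬v) = (1−p_v(u_m))(1−p̃)/Z = 0, so the acceptance probabilities p_v(u) over u ∈ Σ form a probability distribution equal in expectation (over u_m ∼ M_s^¬) to the target M_b. -/

import Mathlib

theorem univer_root_lossless {V : Type*} [Fintype V] [DecidableEq V]
    (Mb Msneg : V → ℝ) (H : Finset V)
    (hMb : ∀ x, 0 ≤ Mb x) (hMs : ∀ x, 0 ≤ Msneg x)
    (hMbs : ∑ x, Mb x = 1) (hMss : ∑ x, Msneg x = 1)
    (hsupp : ∀ x ∈ H, Msneg x = 0)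
    (Z : ℝ) (hZ : Z = 1 - ∑ x ∈ Hᶜ, min (Mb x) (Msneg x))
    (hZpos : 0 < Z) :
    (∀ um : V, (1 - min 1 (Mb um / Msneg um)) * (1 - (1 : ℝ)) / Z = 0) ∧
    (∀ t : V,
      ∑ um, Msneg um *
        (if um = t then min 1 (Mb t / Msneg t)
         else max (Mb t - Msneg t) 0 * (1 - min 1 (Mb um / Msneg um)) / Z)
      = Mb t) := by
  have hmin : ∀ a b : ℝ, 0 ≤ a → 0 ≤ b → a * min 1 (b / a) = min a b := by
    intro a b ha hb
    rcases eq_or_lt_of_le ha with h | h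
    · subst h; simp [min_eq_left hb]
    · rw [mul_min_of_nonneg _ _ h.le, mul_one, mul_div_cancel₀ _ h.ne']
  have hmax : ∀ a b : ℝ, 0 ≤ a → 0 ≤ b → a * (1 - min 1 (b / a)) = max (a - b) 0 := by
    intro a b ha hb
    rw [mul_sub, mul_one, hmin a b ha hb]
    rcases le_total a b with h | h
    · rw [min_eq_left h, max_eq_right (by linarith), sub_self]
    · rw [min_eq_right h, max_eq_left (by linarith)]
  have hZ2 : ∑ x, max (Msneg x - Mb x) 0 = Z := by
    have key : ∀ x, max (Msneg x - Mb x) 0 = Msneg x - min (Mb x) (Msneg x) := by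
      intro x
      rcases le_total (Msneg x) (Mb x) with h | h
      · rw [min_eq_right h, max_eq_right (by linarith), sub_self]
      · rw [min_eq_left h, max_eq_left (by linarith)]
    rw [Finset.sum_congr rfl fun x _ => key x, Finset.sum_sub_distrib, hMss, hZ]
    congr 1
    rw [← Finset.sum_add_sum_compl H (fun x => min (Mb x) (Msneg x))]
    have h0 : ∑ x ∈ H, min (Mb x) (Msneg x) = 0 :=
      Finset.sum_eq_zero fun x hx => by rw [hsupp x hx, min_eq_right (hMb x)]
    rw [h0, zero_add]
  constructor
  · intro um; simp
  · intro t
    rw [← Finset.add_sum_erase _ _ (Finset.mem_univ t)]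
    rw [if_pos rfl]
    have hrest : ∑ um ∈ Finset.univ.erase t,
        Msneg um * (if um = t then min 1 (Mb t / Msneg t)
          else max (Mb t - Msneg t) 0 * (1 - min 1 (Mb um / Msneg um)) / Z)
        = ∑ um ∈ Finset.univ.erase t,
            max (Msneg um - Mb um) 0 * (max (Mb t - Msneg t) 0 / Z) := by
      refine Finset.sum_congr rfl fun um hum => ?_
      rw [if_neg (Finset.mem_erase.mp hum).1, ← hmax (Msneg um) (Mb um) (hMs um) (hMb um)]
      ring
    rw [hrest, ← Finset.sum_mul]
    have herase : ∑ um ∈ Finset.univ.erase t, max (Msneg um - Mb um) 0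
        = Z - max (Msneg t - Mb t) 0 := by
      have := Finset.add_sum_erase Finset.univ (fun x => max (Msneg x - Mb x) 0)
        (Finset.mem_univ t)
      rw [hZ2] at this
      linarith
    rw [herase, hmin (Msneg t) (Mb t) (hMs t) (hMb t)]
    rcases le_total (Mb t) (Msneg t) with h | h
    · rw [min_eq_right h, max_eq_right (by linarith : Mb t - Msneg t ≤ 0)]
      simp
    · rw [min_eq_left h, max_eq_right (by linarith : Msneg t - Mb t ≤ 0),
        max_eq_left (by linarith : (0:ℝ) ≤ Mb t - Msneg t), sub_zero]
      field_simp
      ring
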